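/- arXiv:1708.08095 — 2 statements merged into one kernel-verified Lean document; each statement's English description precedes it below -/
import Mathlib

section
/- Let n be a positive integer, N = 2n, and let ε = (ε_1, ..., ε_N) be uniformly distributed on Ω = {ε ∈ {−1,1}^N : Σ_{i=1}^N ε_i = 0}, with expectation denoted E_S. Let a ∈ {0,1}^N be a vector with exactly ℓ coordinates equal to 1 (and the rest 0), where 1 ≤ ℓ ≤ n. Then for every real p ≥ 2, E_S |Σ_{i=1}^N a_i ε_i|^p ≤ (2 p ℓ)^{p/2}. -/
/-- The set `Ω = {ε ∈ {-1,1}^N : ∑ ε_i = 0}`. -/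
def Omega (N : ℕ) : Finset (Fin N → ℤ) :=
  (Fintype.piFinset fun _ : Fin N => ({-1, 1} : Finset ℤ)).filter fun ε => ∑ i, ε i = 0

/-- Expectation with respect to the uniform distribution on `Ω`. -/
noncomputable def ES (N : ℕ) (g : (Fin N → ℤ) → ℝ) : ℝ :=
  (∑ ε ∈ Omega N, g ε) / ((Omega N).card : ℝ)


def df : ℕ → ℕ
  | 0 => 1
  | (k+1) => (2*k+1) * df k

lemma df_pos (k : ℕ) : 0 < df k := by
  induction k with
  | zero => simp [df]
  | succ k ih => simp [df]; positivity

lemma df_fact (k : ℕ) : 2^k * k.factorial * df k = (2*k).factorial := by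
  induction k with
  | zero => simp [df]
  | succ k ih =>
    have h : 2*(k+1) = (2*k+1) + 1 := by ring
    rw [df, h, Nat.factorial_succ, Nat.factorial_succ]
    rw [show 2*k+1+1 = 2*k+2 by ring]
    calc 2^(k+1) * ((k+1) * k.factorial) * ((2*k+1) * df k)
        = ((2*k+2) * (2*k+1)) * (2^k * k.factorial * df k) := by ring
      _ = (2*k+2) * ((2*k+1) * (2*k).factorial) := by rw [ih]; ring

lemma df_key (k r : ℕ) (h : r ≤ k) :
    Nat.choose (2*k) (2*r) * df r * df (k-r) = df k * Nat.choose k r := by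
  have hM : 0 < 2^k * (r.factorial * (k-r).factorial) := by positivity
  apply Nat.eq_of_mul_eq_mul_right hM
  have h2 : 2*r ≤ 2*k := by omega
  have e1 : 2*k - 2*r = 2*(k-r) := by omega
  calc Nat.choose (2*k) (2*r) * df r * df (k-r) * (2^k * (r.factorial * (k-r).factorial))
      = Nat.choose (2*k) (2*r) * ((2^r * r.factorial * df r) * (2^(k-r) * (k-r).factorial * df (k-r))) := by
        rw [show 2^k = 2^r * 2^(k-r) by rw [← pow_add]; congr 1; omega]; ring
    _ = Nat.choose (2*k) (2*r) * ((2*r).factorial * (2*(k-r)).factorial) := by rw [df_fact, df_fact]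
    _ = (2*k).factorial := by rw [← e1, ← mul_assoc]; exact Nat.choose_mul_factorial_mul_factorial h2
    _ = df k * Nat.choose k r * (2^k * (r.factorial * (k-r).factorial)) := by
        rw [← df_fact k, ← Nat.choose_mul_factorial_mul_factorial h]; ring

lemma df_le (k : ℕ) : df k ≤ (2*k)^k := by
  induction k with
  | zero => simp [df]
  | succ k ih =>
    calc df (k+1) = (2*k+1) * df k := rfl
      _ ≤ (2*(k+1)) * (2*k)^k := Nat.mul_le_mul (by omega) ih
      _ ≤ (2*(k+1)) * (2*(k+1))^k := by
          exact Nat.mul_le_mul_left _ (Nat.pow_le_pow_left (by omega) k)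
      _ = (2*(k+1))^(k+1) := by rw [pow_succ]; ring

lemma mem_Omega {N : ℕ} {ε : Fin N → ℤ} :
    ε ∈ Omega N ↔ (∀ i, ε i = -1 ∨ ε i = 1) ∧ ∑ i, ε i = 0 := by
  simp [Omega, Fintype.mem_piFinset]

lemma swap_mem_Omega {N : ℕ} {ε : Fin N → ℤ} (i j : Fin N) (hε : ε ∈ Omega N) :
    ε ∘ ⇑(Equiv.swap i j) ∈ Omega N := by
  rw [mem_Omega] at hε ⊢
  refine ⟨fun x => hε.1 _, ?_⟩
  rw [← hε.2]
  exact Equiv.sum_comp (Equiv.swap i j) ε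

lemma sum_swap_eq {N : ℕ} (i j : Fin N) (g : (Fin N → ℤ) → ℝ)
    (hg : ∀ ε, g (ε ∘ ⇑(Equiv.swap i j)) = g ε) :
    ∑ ε ∈ Omega N, g ε * (ε i : ℝ) = ∑ ε ∈ Omega N, g ε * (ε j : ℝ) := by
  refine Finset.sum_nbij' (fun ε => ε ∘ ⇑(Equiv.swap i j)) (fun ε => ε ∘ ⇑(Equiv.swap i j))
    (fun ε hε => swap_mem_Omega i j hε) (fun ε hε => swap_mem_Omega i j hε) ?_ ?_ ?_
  · intro ε _; funext x; simp [Function.comp, Equiv.swap_apply_self]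
  · intro ε _; funext x; simp [Function.comp, Equiv.swap_apply_self]
  · intro ε _
    rw [hg]
    simp [Function.comp, Equiv.swap_apply_left]

lemma cond_exp {N : ℕ} (B : Finset (Fin N)) (j : Fin N) (hj : j ∉ B)
    (g : (Fin N → ℤ) → ℝ)
    (hg : ∀ i ∉ B, ∀ ε, g (ε ∘ ⇑(Equiv.swap i j)) = g ε) :
    ((Bᶜ.card : ℝ)) * ∑ ε ∈ Omega N, g ε * (ε j : ℝ)
      = - ∑ ε ∈ Omega N, g ε * (∑ b ∈ B, (ε b : ℝ)) := by
  have key : ∀ i ∈ Bᶜ, ∑ ε ∈ Omega N, g ε * (ε i : ℝ) = ∑ ε ∈ Omega N, g ε * (ε j : ℝ) := by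
    intro i hi
    exact sum_swap_eq i j g (hg i (Finset.mem_compl.1 hi))
  calc ((Bᶜ.card : ℝ)) * ∑ ε ∈ Omega N, g ε * (ε j : ℝ)
      = ∑ i ∈ Bᶜ, ∑ ε ∈ Omega N, g ε * (ε i : ℝ) := by
        rw [Finset.sum_congr rfl key, Finset.sum_const, nsmul_eq_mul]
    _ = ∑ ε ∈ Omega N, g ε * (∑ i ∈ Bᶜ, (ε i : ℝ)) := by
        rw [Finset.sum_comm]
        exact Finset.sum_congr rfl fun ε _ => by rw [Finset.mul_sum]
    _ = - ∑ ε ∈ Omega N, g ε * (∑ b ∈ B, (ε b : ℝ)) := by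
        rw [← Finset.sum_neg_distrib]
        refine Finset.sum_congr rfl fun ε hε => ?_
        have h0 : (∑ i, (ε i : ℝ)) = 0 := by
          have := (mem_Omega.1 hε).2
          exact_mod_cast congrArg (fun z : ℤ => (z : ℝ)) this
        have : ∑ i ∈ Bᶜ, (ε i : ℝ) = - ∑ b ∈ B, (ε b : ℝ) := by
          have := Finset.sum_add_sum_compl B (fun b => (ε b : ℝ))
          linarith [this, h0]
        rw [this]; ring

lemma pm_one_pow (x : ℝ) (hx : x = -1 ∨ x = 1) (e : ℕ) :
    x ^ e = if Even e then 1 else x := by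
  rcases hx with h | h <;> subst h
  · rcases Nat.even_or_odd e with he | he
    · simp [he, Even.neg_one_pow he]
    · simp [Nat.not_even_iff_odd.2 he, Odd.neg_one_pow he]
  · simp

lemma even_image (k : ℕ) :
    (Finset.range (k+1)).image (fun r => 2*r) = (Finset.range (2*k+1)).filter (fun m => Even m) := by
  ext m
  simp only [Finset.mem_image, Finset.mem_filter, Finset.mem_range]
  constructor
  · rintro ⟨r, hr, rfl⟩; exact ⟨by omega, ⟨r, by omega⟩⟩
  · rintro ⟨hm, r, rfl⟩; exact ⟨r, by omega, by omega⟩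

lemma moment_bound {N : ℕ} (B : Finset (Fin N)) :
    ∀ k : ℕ, ∑ ε ∈ Omega N, (∑ b ∈ B, (ε b : ℝ))^(2*k)
      ≤ (df k : ℝ) * (B.card : ℝ)^k * ((Omega N).card : ℝ) := by
  induction B using Finset.cons_induction with
  | empty =>
    intro k
    rcases k with _ | k
    · simp [df]
    · simp
  | cons j B' hj ih =>
    intro k
    set T : (Fin N → ℤ) → ℝ := fun ε => ∑ b ∈ B', (ε b : ℝ) with hT
    have expand : ∀ ε ∈ Omega N,
        (∑ b ∈ Finset.cons j B' hj, (ε b : ℝ))^(2*k)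
          = ∑ m ∈ Finset.range (2*k+1),
              T ε ^ m * (if Even m then 1 else (ε j : ℝ)) * (Nat.choose (2*k) m : ℝ) := by
      intro ε hε
      have hpm : (ε j : ℝ) = -1 ∨ (ε j : ℝ) = 1 := by
        rcases (mem_Omega.1 hε).1 j with h | h <;> [left; right] <;> rw [h] <;> norm_num
      rw [Finset.sum_cons, add_comm, add_pow]
      refine Finset.sum_congr rfl fun m hm => ?_
      have hm' : m ≤ 2*k := by have := Finset.mem_range.1 hm; omega
      rw [pm_one_pow _ hpm (2*k-m)]
      have hiff : Even (2*k - m) ↔ Even m := by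
        rw [Nat.even_sub hm']; simp [Nat.even_mul]
      rw [if_congr hiff rfl rfl]
    rw [Finset.sum_congr rfl expand, Finset.sum_comm]
    have step : ∀ m ∈ Finset.range (2*k+1),
        ∑ ε ∈ Omega N, T ε ^ m * (if Even m then 1 else (ε j : ℝ)) * (Nat.choose (2*k) m : ℝ)
          ≤ if Even m then (Nat.choose (2*k) m : ℝ) * (df (m/2) : ℝ) * (B'.card : ℝ)^(m/2) * ((Omega N).card : ℝ) else 0 := by
      intro m hm
      by_cases he : Even m
      · rw [if_pos he]
        obtain ⟨r, hr⟩ := he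
        have hr2 : m = 2*r := by omega
        subst hr2
        simp only [if_pos (even_two_mul r), mul_one]
        have : ∑ ε ∈ Omega N, T ε ^ (2*r) * (Nat.choose (2*k) (2*r) : ℝ)
            = (Nat.choose (2*k) (2*r) : ℝ) * ∑ ε ∈ Omega N, T ε ^ (2*r) := by
          rw [Finset.mul_sum]; exact Finset.sum_congr rfl fun _ _ => by ring
        rw [this]
        have hdiv : 2*r/2 = r := by omega
        rw [hdiv]
        have := ih r
        have hC : (0:ℝ) ≤ (Nat.choose (2*k) (2*r) : ℝ) := by positivity
        calc (Nat.choose (2*k) (2*r) : ℝ) * ∑ ε ∈ Omega N, T ε ^ (2*r)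
            ≤ (Nat.choose (2*k) (2*r) : ℝ) * ((df r : ℝ) * (B'.card : ℝ)^r * ((Omega N).card : ℝ)) :=
              mul_le_mul_of_nonneg_left this hC
          _ = (Nat.choose (2*k) (2*r) : ℝ) * (df r : ℝ) * (B'.card : ℝ)^r * ((Omega N).card : ℝ) := by ring
      · rw [if_neg he]
        simp only [if_neg he]
        -- ∑ T^m * ε_j * C ≤ 0
        have hgswap : ∀ i ∉ B', ∀ ε : Fin N → ℤ, ((fun ε => T ε ^ m) (ε ∘ ⇑(Equiv.swap i j))) = T ε ^ m := by
          intro i hi ε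
          simp only [hT]
          congr 1
          refine Finset.sum_congr rfl fun b hb => ?_
          have hbi : b ≠ i := fun h => hi (h ▸ hb)
          have hbj : b ≠ j := fun h => hj (h ▸ hb)
          simp [Function.comp, Equiv.swap_apply_of_ne_of_ne hbi hbj]
        have hce := cond_exp B' j hj (fun ε => T ε ^ m) hgswap
        have hTnn : 0 ≤ ∑ ε ∈ Omega N, T ε ^ m * T ε := by
          apply Finset.sum_nonneg
          intro ε _
          have heq : T ε ^ m * T ε = T ε ^ (m+1) := by rw [pow_succ]
          rw [heq]
          have hev : Even (m+1) := by
            rcases Nat.even_or_odd m with h|h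
            · exact absurd h he
            · exact h.add_one
          exact hev.pow_nonneg _
        have hcpos : (0:ℝ) < (B'ᶜ.card : ℝ) := by
          have : j ∈ B'ᶜ := Finset.mem_compl.2 hj
          have := Finset.card_pos.2 ⟨j, this⟩
          exact_mod_cast this
        have hX : ∑ ε ∈ Omega N, T ε ^ m * (ε j : ℝ) ≤ 0 := by
          nlinarith [hce, hTnn, hcpos]
        have : ∑ ε ∈ Omega N, T ε ^ m * (ε j : ℝ) * (Nat.choose (2*k) m : ℝ)
            = (Nat.choose (2*k) m : ℝ) * ∑ ε ∈ Omega N, T ε ^ m * (ε j : ℝ) := by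
          rw [Finset.mul_sum]; exact Finset.sum_congr rfl fun _ _ => by ring
        rw [this]
        exact mul_nonpos_of_nonneg_of_nonpos (by positivity) hX
    calc ∑ m ∈ Finset.range (2*k+1), ∑ ε ∈ Omega N, T ε ^ m * (if Even m then 1 else (ε j : ℝ)) * (Nat.choose (2*k) m : ℝ)
        ≤ ∑ m ∈ Finset.range (2*k+1), (if Even m then (Nat.choose (2*k) m : ℝ) * (df (m/2) : ℝ) * (B'.card : ℝ)^(m/2) * ((Omega N).card : ℝ) else 0) :=
          Finset.sum_le_sum step
      _ = ∑ m ∈ (Finset.range (2*k+1)).filter (fun m => Even m), (Nat.choose (2*k) m : ℝ) * (df (m/2) : ℝ) * (B'.card : ℝ)^(m/2) * ((Omega N).card : ℝ) :=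
          (Finset.sum_filter _ _).symm
      _ = ∑ r ∈ Finset.range (k+1), (Nat.choose (2*k) (2*r) : ℝ) * (df r : ℝ) * (B'.card : ℝ)^r * ((Omega N).card : ℝ) := by
          rw [← even_image, Finset.sum_image (by intro x _ y _ h; dsimp only at h; omega)]
          exact Finset.sum_congr rfl fun r _ => by rw [show 2*r/2 = r by omega]
      _ ≤ ∑ r ∈ Finset.range (k+1), (df k : ℝ) * (Nat.choose k r : ℝ) * (B'.card : ℝ)^r * ((Omega N).card : ℝ) := by
          refine Finset.sum_le_sum fun r hr => ?_
          have hrk : r ≤ k := by have := Finset.mem_range.1 hr; omega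
          have hkey : (Nat.choose (2*k) (2*r) * df r : ℕ) ≤ df k * Nat.choose k r := by
            calc Nat.choose (2*k) (2*r) * df r ≤ Nat.choose (2*k) (2*r) * df r * df (k-r) :=
                  Nat.le_mul_of_pos_right _ (df_pos _)
              _ = df k * Nat.choose k r := df_key k r hrk
          have : ((Nat.choose (2*k) (2*r) : ℝ) * (df r : ℝ)) ≤ (df k : ℝ) * (Nat.choose k r : ℝ) := by
            exact_mod_cast hkey
          have hnn : (0:ℝ) ≤ (B'.card : ℝ)^r * ((Omega N).card : ℝ) := by positivity
          calc (Nat.choose (2*k) (2*r) : ℝ) * (df r : ℝ) * (B'.card : ℝ)^r * ((Omega N).card : ℝ)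
              = ((Nat.choose (2*k) (2*r) : ℝ) * (df r : ℝ)) * ((B'.card : ℝ)^r * ((Omega N).card : ℝ)) := by ring
            _ ≤ ((df k : ℝ) * (Nat.choose k r : ℝ)) * ((B'.card : ℝ)^r * ((Omega N).card : ℝ)) :=
                mul_le_mul_of_nonneg_right this hnn
            _ = (df k : ℝ) * (Nat.choose k r : ℝ) * (B'.card : ℝ)^r * ((Omega N).card : ℝ) := by ring
      _ = (df k : ℝ) * ((Finset.cons j B' hj).card : ℝ)^k * ((Omega N).card : ℝ) := by
          rw [Finset.card_cons]
          have : (((B'.card + 1 : ℕ)) : ℝ)^k = ∑ r ∈ Finset.range (k+1), (B'.card : ℝ)^r * 1^(k-r) * (Nat.choose k r : ℝ) := by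
            push_cast
            exact add_pow (B'.card : ℝ) 1 k
          rw [this, Finset.mul_sum, Finset.sum_mul]
          exact Finset.sum_congr rfl fun r _ => by ring

theorem stmt7 (n ℓ : ℕ) (h1 : 1 ≤ ℓ) (h2 : ℓ ≤ n) (a : Fin (2 * n) → ℝ)
    (ha : ∀ i, a i = 0 ∨ a i = 1)
    (hcard : (Finset.univ.filter fun i => a i = 1).card = ℓ)
    (p : ℝ) (hp : 2 ≤ p) :
    (ES (2 * n) fun ε => |∑ i, a i * (ε i : ℝ)| ^ p) ≤ (2 * p * ℓ) ^ (p / 2) := by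
  have hp0 : (0:ℝ) < p := by linarith
  have hbase : (0:ℝ) ≤ 2 * p * ℓ := by positivity
  set A : Finset (Fin (2*n)) := Finset.univ.filter (fun i => a i = 1) with hA
  have hS : ∀ ε : Fin (2*n) → ℤ, (∑ i, a i * (ε i : ℝ)) = ∑ b ∈ A, (ε b : ℝ) := by
    intro ε
    rw [hA, Finset.sum_filter]
    refine Finset.sum_congr rfl fun i _ => ?_
    rcases ha i with h | h
    · rw [if_neg (by rw [h]; norm_num), h, zero_mul]
    · rw [if_pos h, h, one_mul]
  by_cases hΩ : ((Omega (2*n)).card : ℝ) = 0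
  · unfold ES
    rw [hΩ, div_zero]
    exact Real.rpow_nonneg hbase _
  have hΩpos : (0:ℝ) < ((Omega (2*n)).card : ℝ) :=
    lt_of_le_of_ne (Nat.cast_nonneg _) (Ne.symm hΩ)
  set k : ℕ := ⌈p / 2⌉₊ with hk
  have hk1 : 1 ≤ k := Nat.one_le_iff_ne_zero.2 (by
    simp only [hk, ne_eq, Nat.ceil_eq_zero, not_le]
    positivity)
  have hp2k : p ≤ 2 * k := by
    have := Nat.le_ceil (p / 2)
    rw [← hk] at this
    linarith
  have hkp : (k:ℝ) ≤ p := by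
    have h := Nat.ceil_lt_add_one (show (0:ℝ) ≤ p / 2 by positivity)
    rw [← hk] at h
    linarith
  set P : ℝ := (2 * k : ℝ) / p with hP
  have hP1 : 1 ≤ P := (one_le_div hp0).2 hp2k
  have hPpos : 0 < P := lt_of_lt_of_le one_pos hP1
  have hw : ∀ ε ∈ Omega (2*n), (0:ℝ) ≤ 1 / ((Omega (2*n)).card : ℝ) := fun _ _ => by positivity
  have hw' : ∑ _ε ∈ Omega (2*n), (1 / ((Omega (2*n)).card : ℝ)) = 1 := by
    rw [Finset.sum_const, nsmul_eq_mul]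
    field_simp
  have hz : ∀ ε ∈ Omega (2*n), (0:ℝ) ≤ |∑ i, a i * (ε i : ℝ)| ^ p :=
    fun ε _ => Real.rpow_nonneg (abs_nonneg _) _
  have jensen := Real.arith_mean_le_rpow_mean (Omega (2*n)) (fun _ => 1 / ((Omega (2*n)).card : ℝ))
    (fun ε => |∑ i, a i * (ε i : ℝ)| ^ p) hw hw' hz hP1
  have hES : ES (2*n) (fun ε => |∑ i, a i * (ε i : ℝ)| ^ p)
      = ∑ ε ∈ Omega (2*n), (1 / ((Omega (2*n)).card : ℝ)) * |∑ i, a i * (ε i : ℝ)| ^ p := by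
    unfold ES
    rw [Finset.sum_div]
    exact Finset.sum_congr rfl fun ε _ => by ring
  rw [hES]
  have hzP : ∀ ε : Fin (2*n) → ℤ, (|∑ i, a i * (ε i : ℝ)| ^ p) ^ P = (∑ b ∈ A, (ε b : ℝ)) ^ (2*k) := by
    intro ε
    rw [← Real.rpow_mul (abs_nonneg _)]
    have hpP : p * P = ((2*k : ℕ) : ℝ) := by
      rw [hP]; push_cast; field_simp
    rw [hpP, Real.rpow_natCast, Even.pow_abs (even_two_mul k), hS]
  have hmb := moment_bound A (k := k)
  rw [hcard] at hmb
  have hinner : ∑ ε ∈ Omega (2*n), (1 / ((Omega (2*n)).card : ℝ)) * (|∑ i, a i * (ε i : ℝ)| ^ p) ^ P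
      ≤ (((2 * k * ℓ)^k : ℕ) : ℝ) := by
    have e1 : ∑ ε ∈ Omega (2*n), (1 / ((Omega (2*n)).card : ℝ)) * (|∑ i, a i * (ε i : ℝ)| ^ p) ^ P
        = (∑ ε ∈ Omega (2*n), (∑ b ∈ A, (ε b : ℝ)) ^ (2*k)) / ((Omega (2*n)).card : ℝ) := by
      rw [Finset.sum_div]
      exact Finset.sum_congr rfl fun ε _ => by rw [hzP ε]; ring
    rw [e1, div_le_iff₀ hΩpos]
    calc ∑ ε ∈ Omega (2*n), (∑ b ∈ A, (ε b : ℝ)) ^ (2*k)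
        ≤ (df k : ℝ) * (ℓ : ℝ)^k * ((Omega (2*n)).card : ℝ) := hmb
      _ ≤ (((2 * k * ℓ)^k : ℕ) : ℝ) * ((Omega (2*n)).card : ℝ) := by
          refine mul_le_mul_of_nonneg_right ?_ (le_of_lt hΩpos)
          have hnat : (df k * ℓ^k : ℕ) ≤ (2*k*ℓ)^k := by
            calc df k * ℓ^k ≤ (2*k)^k * ℓ^k := Nat.mul_le_mul_right _ (df_le k)
              _ = (2*k*ℓ)^k := (mul_pow (2*k) ℓ k).symm
          calc (df k : ℝ) * (ℓ : ℝ)^k = ((df k * ℓ^k : ℕ) : ℝ) := by push_cast; ring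
            _ ≤ (((2*k*ℓ)^k : ℕ) : ℝ) := by exact_mod_cast hnat
  -- final chain
  calc ∑ ε ∈ Omega (2*n), (1 / ((Omega (2*n)).card : ℝ)) * |∑ i, a i * (ε i : ℝ)| ^ p
      ≤ (∑ ε ∈ Omega (2*n), (1 / ((Omega (2*n)).card : ℝ)) * (|∑ i, a i * (ε i : ℝ)| ^ p) ^ P) ^ (1/P) := jensen
    _ ≤ ((((2 * k * ℓ)^k : ℕ) : ℝ)) ^ (1/P) := by
        refine Real.rpow_le_rpow ?_ hinner (by positivity)
        refine Finset.sum_nonneg fun ε hε => ?_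
        have := hz ε hε
        positivity
    _ = ((2 * (k:ℝ) * (ℓ:ℝ))) ^ (p/2) := by
        push_cast
        rw [← Real.rpow_natCast (2 * (k:ℝ) * (ℓ:ℝ)) k, ← Real.rpow_mul (by positivity)]
        congr 1
        rw [hP]
        have hk0 : (k:ℝ) ≠ 0 := by
          have : (1:ℝ) ≤ (k:ℝ) := by exact_mod_cast hk1
          linarith
        field_simp
    _ ≤ (2 * p * ℓ) ^ (p / 2) := by
        refine Real.rpow_le_rpow (by positivity) ?_ (by positivity)
        have hl0 : (0:ℝ) ≤ (ℓ:ℝ) := Nat.cast_nonneg _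
        nlinarith
end

section
/- Let n be a positive integer and 1 ≤ ℓ ≤ n. Let ξ be a hypergeometric random variable with parameters (2n, n, ℓ), and let S_ℓ = Σ_{i=1}^ℓ δ_i be a sum of ℓ independent Rademacher random variables (each uniform on {−1,1}). Then for every real p ≥ 1, E |ξ − E ξ|^p ≤ 2^{1−p} · E |2 S_ℓ|^p = 2 · E |S_ℓ|^p. -/
/-- The probability that a hypergeometric random variable with parameters
`(N, n, ℓ)` takes the value `k`: `C(ℓ,k) C(N-ℓ, n-k) / C(N, n)`. -/
noncomputable def hgP (N n ℓ k : ℕ) : ℝ :=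
  ((ℓ.choose k : ℝ) * ((N - ℓ).choose (n - k) : ℝ)) / ((N.choose n : ℝ))

/-- The mean of a hypergeometric random variable with parameters `(N, n, ℓ)`. -/
noncomputable def hgMean (N n ℓ : ℕ) : ℝ :=
  ∑ k ∈ Finset.range (ℓ + 1), (k : ℝ) * hgP N n ℓ k

/-- The `p`-th absolute central moment `E |ξ - E ξ|^p` of a hypergeometric random
variable `ξ` with parameters `(N, n, ℓ)`. -/
noncomputable def hgCentralMoment (N n ℓ : ℕ) (p : ℝ) : ℝ :=
  ∑ k ∈ Finset.range (ℓ + 1), |(k : ℝ) - hgMean N n ℓ| ^ p * hgP N n ℓ k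

/-- Expectation over `ℓ` independent Rademacher signs `δ = (δ_1, ..., δ_ℓ)`,
each uniform on `{-1, 1}`. -/
noncomputable def Edelta (ℓ : ℕ) (g : (Fin ℓ → ℤ) → ℝ) : ℝ :=
  (∑ δ ∈ Fintype.piFinset fun _ : Fin ℓ => ({-1, 1} : Finset ℤ), g δ) /
    ((Fintype.piFinset fun _ : Fin ℓ => ({-1, 1} : Finset ℤ)).card : ℝ)

/-! ### Auxiliary lemmas about central binomial coefficients -/

lemma cb_sq_le (t : ℕ) : (2*t+1) * (Nat.centralBinom t)^2 ≤ 16^t := by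
  induction t with
  | zero => simp [Nat.centralBinom]
  | succ t ih =>
    have h := Nat.succ_mul_centralBinom_succ t
    have key : (t+1)^2 * ((2*(t+1)+1) * (Nat.centralBinom (t+1))^2)
        ≤ (t+1)^2 * 16^(t+1) := by
      have e1 : (t+1)^2 * ((2*(t+1)+1) * (Nat.centralBinom (t+1))^2)
          = (2*t+3) * ((t+1) * Nat.centralBinom (t+1))^2 := by ring
      rw [e1, h]
      have e2 : (2*t+3) * (2 * (2*t+1) * Nat.centralBinom t)^2
          = (4*(2*t+1)*(2*t+3)) * ((2*t+1) * (Nat.centralBinom t)^2) := by ring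
      rw [e2]
      calc (4*(2*t+1)*(2*t+3)) * ((2*t+1) * (Nat.centralBinom t)^2)
          ≤ (4*(2*t+1)*(2*t+3)) * 16^t := Nat.mul_le_mul_left _ ih
        _ ≤ ((t+1)^2 * 16) * 16^t := by
            apply Nat.mul_le_mul_right; nlinarith
        _ = (t+1)^2 * 16^(t+1) := by ring
    exact Nat.le_of_mul_le_mul_left key (by positivity)

lemma le_cb_sq (n : ℕ) (hn : 1 ≤ n) : 16^n ≤ 4*n*(Nat.centralBinom n)^2 := by
  induction n with
  | zero => omega
  | succ n ih =>
    rcases Nat.eq_or_lt_of_le hn with h|h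
    · simp [← h, Nat.centralBinom]
    · have hn1 : 1 ≤ n := by omega
      have ih := ih hn1
      have h := Nat.succ_mul_centralBinom_succ n
      have key : (n+1)^2 * 16^(n+1) ≤ (n+1)^2 * (4*(n+1)*(Nat.centralBinom (n+1))^2) := by
        calc (n+1)^2 * 16^(n+1) = 16*(n+1)^2 * 16^n := by ring
          _ ≤ 16*(n+1)^2 * (4*n*(Nat.centralBinom n)^2) := Nat.mul_le_mul_left _ ih
          _ = (4*n*(n+1)) * (16*(n+1) * (Nat.centralBinom n)^2) := by ring
          _ ≤ ((2*n+1)^2) * (16*(n+1) * (Nat.centralBinom n)^2) := by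
              apply Nat.mul_le_mul_right; nlinarith
          _ = 4*(n+1) * (2*(2*n+1) * Nat.centralBinom n)^2 := by ring
          _ = 4*(n+1) * ((n+1) * Nat.centralBinom (n+1))^2 := by rw [h]
          _ = (n+1)^2 * (4*(n+1)*(Nat.centralBinom (n+1))^2) := by ring
      exact Nat.le_of_mul_le_mul_left key (by positivity)

lemma mid_sq_le (m : ℕ) : (m+1) * (m.choose (m/2))^2 ≤ 4^m := by
  rcases Nat.even_or_odd m with ⟨t, ht⟩ | ⟨t, ht⟩
  · subst ht
    have : (t+t)/2 = t := by omega
    rw [this]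
    have e : t.centralBinom = (t+t).choose t := by
      rw [Nat.centralBinom, two_mul]
    calc (t+t+1) * ((t+t).choose t)^2 = (2*t+1) * (Nat.centralBinom t)^2 := by
          rw [e]; ring_nf
      _ ≤ 16^t := cb_sq_le t
      _ = 4^(t+t) := by rw [← two_mul, pow_mul]; norm_num
  · subst ht
    have hdiv : (2*t+1)/2 = t := by omega
    rw [hdiv]
    have hsymm : (2*t+1).choose (t+1) = (2*t+1).choose t := by
      have := Nat.choose_symm (n := 2*t+1) (k := t+1) (by omega)
      simpa [show 2*t+1-(t+1) = t by omega] using this.symm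
    have hpas : Nat.centralBinom (t+1) = 2 * ((2*t+1).choose t) := by
      rw [Nat.centralBinom]
      have : 2*(t+1) = (2*t+1)+1 := by ring
      rw [this, Nat.choose_succ_succ, hsymm]; ring
    have h4 : 4 * ((2*t+1+1) * ((2*t+1).choose t)^2)
        = (2*t+2) * (Nat.centralBinom (t+1))^2 := by rw [hpas]; ring
    have := cb_sq_le (t+1)
    have h5 : (2*t+2) * (Nat.centralBinom (t+1))^2 ≤ 16^(t+1) := by
      calc (2*t+2) * (Nat.centralBinom (t+1))^2
          ≤ (2*(t+1)+1) * (Nat.centralBinom (t+1))^2 := by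
            apply Nat.mul_le_mul_right; omega
        _ ≤ 16^(t+1) := this
    have e : (16:ℕ)^(t+1) = 4 * 4^(2*t+1) := by
      have h16 : (16:ℕ)^(t+1) = 4^(2*(t+1)) := by rw [pow_mul]; norm_num
      rw [h16, show 2*(t+1) = (2*t+1)+1 by ring, pow_succ]; ring
    have h6 : 4 * ((2*t+1+1) * ((2*t+1).choose t)^2) ≤ 4 * 4^(2*t+1) := by
      rw [h4, ← e]; exact h5
    exact Nat.le_of_mul_le_mul_left h6 (by norm_num)

lemma key_nat (n ℓ k : ℕ) (h1 : 1 ≤ ℓ) (h2 : ℓ ≤ n) :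
    2^ℓ * ((2*n - ℓ).choose (n - k)) ≤ 2 * (2*n).choose n := by
  set m := 2*n - ℓ with hm
  have hmid : (m.choose (n-k)) ≤ m.choose (m/2) := Nat.choose_le_middle _ _
  have hcb : (2*n).choose n = Nat.centralBinom n := rfl
  have hsq : (2^ℓ * (m.choose (m/2)))^2 ≤ (2 * (2*n).choose n)^2 := by
    have hU : (m+1) * (m.choose (m/2))^2 ≤ 4^m := mid_sq_le m
    have hL : 16^n ≤ 4*n*(Nat.centralBinom n)^2 := le_cb_sq n (h1.trans h2)
    have e16 : 4^ℓ * 4^m = 16^n := by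
      rw [← pow_add, show ℓ + m = 2*n by omega, show (16:ℕ) = 4^2 by norm_num, ← pow_mul]
    have step : (n+1) * (4^ℓ * (m.choose (m/2))^2) ≤ 4*(n+1)*(Nat.centralBinom n)^2 := by
      calc (n+1) * (4^ℓ * (m.choose (m/2))^2)
          ≤ (m+1) * (4^ℓ * (m.choose (m/2))^2) := by
            apply Nat.mul_le_mul_right; omega
        _ = 4^ℓ * ((m+1) * (m.choose (m/2))^2) := by ring
        _ ≤ 4^ℓ * 4^m := Nat.mul_le_mul_left _ hU
        _ = 16^n := e16
        _ ≤ 4*n*(Nat.centralBinom n)^2 := hL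
        _ ≤ 4*(n+1)*(Nat.centralBinom n)^2 := by
            apply Nat.mul_le_mul_right; omega
    have step2 : 4^ℓ * (m.choose (m/2))^2 ≤ 4*(Nat.centralBinom n)^2 :=
      Nat.le_of_mul_le_mul_left (by calc (n+1) * (4^ℓ * (m.choose (m/2))^2)
          ≤ 4*(n+1)*(Nat.centralBinom n)^2 := step
        _ = (n+1) * (4*(Nat.centralBinom n)^2) := by ring) (by omega)
    calc (2^ℓ * (m.choose (m/2)))^2 = 4^ℓ * (m.choose (m/2))^2 := by
          rw [mul_pow, ← pow_mul, show (4:ℕ) = 2^2 by norm_num, ← pow_mul, mul_comm ℓ 2]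
      _ ≤ 4*(Nat.centralBinom n)^2 := step2
      _ = (2 * (2*n).choose n)^2 := by rw [hcb]; ring
  have h2le : 2^ℓ * (m.choose (m/2)) ≤ 2 * (2*n).choose n := by
    by_contra hc
    push_neg at hc
    have := Nat.pow_lt_pow_left hc (n := 2) (by norm_num)
    omega
  calc 2^ℓ * (m.choose (n-k)) ≤ 2^ℓ * (m.choose (m/2)) := Nat.mul_le_mul_left _ hmid
    _ ≤ 2 * (2*n).choose n := h2le

/-! ### The hypergeometric distribution: normalization, symmetry, mean -/

lemma vander (n ℓ : ℕ) (h2 : ℓ ≤ n) :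
    ∑ k ∈ Finset.range (ℓ+1), ℓ.choose k * (2*n-ℓ).choose (n-k) = (2*n).choose n := by
  have h : (2*n).choose n = (ℓ + (2*n - ℓ)).choose n := by
    congr 1; omega
  rw [h, Nat.add_choose_eq, Finset.Nat.sum_antidiagonal_eq_sum_range_succ_mk]
  apply Finset.sum_subset
  · apply Finset.range_subset_range.2; omega
  · intro x _ hx
    have : ℓ < x := by simp [Finset.mem_range] at hx ⊢; omega
    rw [Nat.choose_eq_zero_of_lt this, zero_mul]

lemma sum_hgP (n ℓ : ℕ) (h1 : 1 ≤ ℓ) (h2 : ℓ ≤ n) :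
    ∑ k ∈ Finset.range (ℓ+1), hgP (2*n) n ℓ k = 1 := by
  have hpos : 0 < ((2*n).choose n : ℝ) := by
    exact_mod_cast Nat.choose_pos (by omega)
  unfold hgP
  rw [← Finset.sum_div]
  rw [div_eq_one_iff_eq (ne_of_gt hpos)]
  exact_mod_cast vander n ℓ h2

lemma hgP_symm (n ℓ k : ℕ) (h2 : ℓ ≤ n) (hk : k ≤ ℓ) :
    hgP (2*n) n ℓ (ℓ - k) = hgP (2*n) n ℓ k := by
  unfold hgP
  rw [Nat.choose_symm hk]
  congr 2
  rw [show n - (ℓ - k) = (2*n-ℓ) - (n - k) by omega, Nat.choose_symm (by omega)]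

lemma hgMean_eq (n ℓ : ℕ) (h1 : 1 ≤ ℓ) (h2 : ℓ ≤ n) :
    hgMean (2*n) n ℓ = ℓ / 2 := by
  have hs := sum_hgP n ℓ h1 h2
  have hrefl : hgMean (2*n) n ℓ = ∑ k ∈ Finset.range (ℓ+1), ((ℓ:ℝ) - k) * hgP (2*n) n ℓ k := by
    unfold hgMean
    rw [← Finset.sum_range_reflect]
    apply Finset.sum_congr rfl
    intro k hk
    have hk' : k ≤ ℓ := by simp [Finset.mem_range] at hk; omega
    rw [show ℓ + 1 - 1 - k = ℓ - k by omega, hgP_symm n ℓ k h2 hk']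
    congr 1
    push_cast [Nat.cast_sub hk']
    ring
  have : hgMean (2*n) n ℓ + hgMean (2*n) n ℓ = ℓ := by
    nth_rewrite 2 [hrefl]
    unfold hgMean
    rw [← Finset.sum_add_distrib]
    calc (∑ k ∈ Finset.range (ℓ+1), ((k:ℝ) * hgP (2*n) n ℓ k + ((ℓ:ℝ) - k) * hgP (2*n) n ℓ k))
        = ∑ k ∈ Finset.range (ℓ+1), (ℓ:ℝ) * hgP (2*n) n ℓ k := by
          apply Finset.sum_congr rfl; intro k _; ring
      _ = (ℓ:ℝ) * ∑ k ∈ Finset.range (ℓ+1), hgP (2*n) n ℓ k := by rw [Finset.mul_sum]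
      _ = ℓ := by rw [hs, mul_one]
  linarith

/-! ### Pointwise domination of the hypergeometric by the binomial weights -/

lemma hgP_le (n ℓ k : ℕ) (h1 : 1 ≤ ℓ) (h2 : ℓ ≤ n) :
    hgP (2*n) n ℓ k ≤ 2 * (ℓ.choose k : ℝ) / 2^ℓ := by
  have hC : (0:ℝ) < ((2*n).choose n : ℝ) := by
    exact_mod_cast Nat.choose_pos (by omega)
  have h2ℓ : (0:ℝ) < (2:ℝ)^ℓ := by positivity
  have hkey : ((2*n - ℓ).choose (n - k) : ℝ) * 2^ℓ ≤ 2 * ((2*n).choose n : ℝ) := by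
    have := key_nat n ℓ k h1 h2
    have := (Nat.cast_le (α := ℝ)).2 this
    push_cast at this
    linarith
  unfold hgP
  rw [div_le_div_iff₀ hC h2ℓ]
  have ha : (0:ℝ) ≤ (ℓ.choose k : ℝ) := Nat.cast_nonneg _
  calc (ℓ.choose k : ℝ) * ((2*n - ℓ).choose (n - k) : ℝ) * 2^ℓ
      = (ℓ.choose k : ℝ) * (((2*n - ℓ).choose (n - k) : ℝ) * 2^ℓ) := by ring
    _ ≤ (ℓ.choose k : ℝ) * (2 * ((2*n).choose n : ℝ)) := by
        exact mul_le_mul_of_nonneg_left hkey ha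
    _ = 2 * (ℓ.choose k : ℝ) * ((2*n).choose n : ℝ) := by ring

/-! ### Sums over Rademacher signs -/

lemma piFinset_card (ℓ : ℕ) :
    ((Fintype.piFinset fun _ : Fin ℓ => ({-1, 1} : Finset ℤ)).card : ℝ) = 2^ℓ := by
  rw [Fintype.card_piFinset]
  simp

lemma rad_sum (ℓ : ℕ) (f : ℝ → ℝ) :
    ∑ δ ∈ Fintype.piFinset (fun _ : Fin ℓ => ({-1,1} : Finset ℤ)), f (∑ i, (δ i : ℝ))
    = ∑ k ∈ Finset.range (ℓ+1), (ℓ.choose k : ℝ) * f (2*k - ℓ) := by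
  have stepA : ∑ δ ∈ Fintype.piFinset (fun _ : Fin ℓ => ({-1,1} : Finset ℤ)), f (∑ i, (δ i : ℝ))
      = ∑ s ∈ (Finset.univ : Finset (Fin ℓ)).powerset, f (2 * s.card - ℓ) := by
    apply Finset.sum_nbij' (i := fun δ => Finset.univ.filter (fun x => δ x = 1))
      (j := fun s x => if x ∈ s then (1:ℤ) else -1)
    · intro δ _; exact Finset.mem_powerset.2 (Finset.filter_subset _ _)
    · intro s _
      rw [Fintype.mem_piFinset]
      intro x
      by_cases h : x ∈ s <;> simp [h]
    · intro δ hδ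
      funext x
      rw [Fintype.mem_piFinset] at hδ
      have := hδ x
      simp only [Finset.mem_insert, Finset.mem_singleton] at this
      by_cases h : δ x = 1 <;> simp [h]
      rcases this with h'|h' <;> simp [h'] at h ⊢
    · intro s _
      ext x
      simp only [Finset.mem_filter, Finset.mem_univ, true_and]
      by_cases h : x ∈ s <;> simp [h]
    · intro δ hδ
      congr 1
      rw [Fintype.mem_piFinset] at hδ
      have hval : ∀ i : Fin ℓ, ((δ i : ℝ)) = (if δ i = 1 then (2:ℝ) else 0) - 1 := by
        intro i
        have := hδ i
        simp only [Finset.mem_insert, Finset.mem_singleton] at this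
        rcases this with h'|h' <;> norm_num [h']
      calc ∑ i, (δ i : ℝ) = ∑ i : Fin ℓ, ((if δ i = 1 then (2:ℝ) else 0) - 1) := by
            exact Finset.sum_congr rfl (fun i _ => hval i)
        _ = 2 * ∑ i : Fin ℓ, (if δ i = 1 then (1:ℝ) else 0) - ℓ := by
            rw [Finset.sum_sub_distrib, Finset.mul_sum]
            simp [mul_ite]
        _ = 2 * (Finset.univ.filter (fun x => δ x = 1)).card - ℓ := by
            rw [Finset.sum_boole]
  rw [stepA, Finset.sum_powerset_apply_card (fun m => f (2*m - ℓ))]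
  simp only [Finset.card_univ, Fintype.card_fin, nsmul_eq_mul]

lemma Edelta_two_mul (ℓ : ℕ) (p : ℝ) :
    Edelta ℓ (fun δ => |2 * ∑ i, (δ i : ℝ)| ^ p) =
      (2:ℝ)^p * Edelta ℓ (fun δ => |∑ i, (δ i : ℝ)| ^ p) := by
  unfold Edelta
  rw [← mul_div_assoc, Finset.mul_sum]
  congr 1
  apply Finset.sum_congr rfl
  intro δ _
  have h : |2 * ∑ i, ((δ i : ℤ) : ℝ)| = 2 * |∑ i, ((δ i : ℤ) : ℝ)| := by
    rw [abs_mul]; norm_num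
  simp only []
  rw [h, Real.mul_rpow (by norm_num) (abs_nonneg _)]

lemma two_rpow_eq (p : ℝ) : (2:ℝ)^(1-p) * (2:ℝ)^p = 2 := by
  rw [← Real.rpow_add (by norm_num)]
  norm_num

theorem stmt12 (n ℓ : ℕ) (h1 : 1 ≤ ℓ) (h2 : ℓ ≤ n) (p : ℝ) (hp : 1 ≤ p) :
    hgCentralMoment (2 * n) n ℓ p ≤
        (2 : ℝ) ^ (1 - p) * Edelta ℓ (fun δ => |2 * ∑ i, (δ i : ℝ)| ^ p) ∧
      (2 : ℝ) ^ (1 - p) * Edelta ℓ (fun δ => |2 * ∑ i, (δ i : ℝ)| ^ p) =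
        2 * Edelta ℓ (fun δ => |∑ i, (δ i : ℝ)| ^ p) := by
  have heq : (2 : ℝ) ^ (1 - p) * Edelta ℓ (fun δ => |2 * ∑ i, (δ i : ℝ)| ^ p) =
      2 * Edelta ℓ (fun δ => |∑ i, (δ i : ℝ)| ^ p) := by
    rw [Edelta_two_mul, ← mul_assoc, two_rpow_eq]
  refine ⟨?_, heq⟩
  rw [heq]
  have hE : Edelta ℓ (fun δ => |∑ i, (δ i : ℝ)| ^ p)
      = (∑ k ∈ Finset.range (ℓ+1), (ℓ.choose k : ℝ) * |2*(k:ℝ) - ℓ| ^ p) / 2^ℓ := by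
    unfold Edelta
    rw [piFinset_card, rad_sum ℓ (fun x => |x| ^ p)]
  rw [hE]
  unfold hgCentralMoment
  rw [hgMean_eq n ℓ h1 h2]
  rw [mul_div_assoc']
  rw [Finset.mul_sum, Finset.sum_div]
  apply Finset.sum_le_sum
  intro k _
  have habs : |2*(k:ℝ) - ℓ| = 2 * |(k:ℝ) - ℓ/2| := by
    rw [show (2*(k:ℝ)-(ℓ:ℝ)) = 2*((k:ℝ)-(ℓ:ℝ)/2) by ring, abs_mul]
    norm_num
  have hp0 : (0:ℝ) ≤ p := le_trans zero_le_one hp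
  have h2p : (1:ℝ) ≤ (2:ℝ)^p := by
    calc (1:ℝ) = (2:ℝ)^(0:ℝ) := by rw [Real.rpow_zero]
      _ ≤ (2:ℝ)^p := Real.rpow_le_rpow_of_exponent_le (by norm_num) hp0
  have hA : (0:ℝ) ≤ |(k:ℝ) - ℓ/2| ^ p := Real.rpow_nonneg (abs_nonneg _) _
  have h2ℓ : (0:ℝ) < (2:ℝ)^ℓ := by positivity
  rw [habs, Real.mul_rpow (by norm_num) (abs_nonneg _)]
  calc |(k:ℝ) - ℓ/2| ^ p * hgP (2*n) n ℓ k
      ≤ |(k:ℝ) - ℓ/2| ^ p * (2 * (ℓ.choose k : ℝ) / 2^ℓ) :=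
        mul_le_mul_of_nonneg_left (hgP_le n ℓ k h1 h2) hA
    _ = (|(k:ℝ) - ℓ/2| ^ p * (2 * (ℓ.choose k : ℝ) / 2^ℓ)) * 1 := (mul_one _).symm
    _ ≤ (|(k:ℝ) - ℓ/2| ^ p * (2 * (ℓ.choose k : ℝ) / 2^ℓ)) * (2:ℝ)^p := by
        apply mul_le_mul_of_nonneg_left h2p
        positivity
    _ = 2 * ((ℓ.choose k : ℝ) * ((2:ℝ)^p * |(k:ℝ) - ℓ/2| ^ p)) / 2^ℓ := by ring
end
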